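/- If a cycle C_n (n ≥ 3) is coloured with k colours by a parity vertex colouring, then 2n − 1 ≤ 2^k − 1, and hence k ≥ ⌈log₂ n⌉ + 1. -/

import Mathlib

open SimpleGraph

/-- A colouring `c` of the vertices of `G` with `k` colours is a *parity vertex colouring*
if every (nonempty) path in `G` contains an odd number of occurrences of some colour. -/
def IsParityColoring {V : Type} (G : SimpleGraph V) {k : ℕ} (c : V → Fin k) : Prop :=
  ∀ ⦃u v : V⦄ (p : G.Walk u v), p.IsPath → ∃ i : Fin k, Odd ((p.support.map c).count i)

/-- The parity vertex chromatic number `χ_p(G)`: the least number of colours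
in a parity vertex colouring of `G`. -/
noncomputable def parityChromaticNumber {V : Type} (G : SimpleGraph V) : ℕ :=
  sInf {k | ∃ c : V → Fin k, IsParityColoring G c}

namespace CycleParityAux

variable {n k : ℕ}

def vtx (h3 : 3 ≤ n) (j : ℕ) : Fin n := ⟨j % n, Nat.mod_lt _ (by omega)⟩

lemma vtx_add_n (h3 : 3 ≤ n) (j : ℕ) : vtx h3 (j + n) = vtx h3 j := by
  simp [vtx, Nat.add_mod_right]

lemma vtx_adj (h3 : 3 ≤ n) (j : ℕ) : (cycleGraph n).Adj (vtx h3 j) (vtx h3 (j+1)) := by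
  haveI : NeZero n := ⟨by omega⟩
  rw [cycleGraph_adj']
  right
  have h1 : vtx h3 (j+1) = vtx h3 j + 1 := by
    apply Fin.ext
    simp only [vtx, Fin.add_def]
    rw [Fin.val_one' n, ← Nat.add_mod]
  rw [h1, add_sub_cancel_left, Fin.val_one' n, Nat.mod_eq_of_lt (by omega)]

end CycleParityAux

namespace CycleParityAux

def arcWalk (h3 : 3 ≤ n) : (m a : ℕ) → (cycleGraph n).Walk (vtx h3 a) (vtx h3 (a + m))
  | 0, a => SimpleGraph.Walk.nil.copy rfl (by rw [Nat.add_zero])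
  | m+1, a =>
      SimpleGraph.Walk.cons (vtx_adj h3 a)
        ((arcWalk h3 m (a+1)).copy rfl (by congr 1; omega))

lemma arcWalk_support (h3 : 3 ≤ n) (m a : ℕ) :
    (arcWalk h3 m a).support = (List.range' a (m+1)).map (vtx h3) := by
  induction m generalizing a with
  | zero => simp [arcWalk]
  | succ m ih =>
      rw [arcWalk, SimpleGraph.Walk.support_cons, SimpleGraph.Walk.support_copy, ih,
        List.range'_succ (s := a) (n := m+1)]
      simp

lemma arcWalk_isPath (h3 : 3 ≤ n) (m a : ℕ) (hm : m + 1 ≤ n) : (arcWalk h3 m a).IsPath := by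
  rw [SimpleGraph.Walk.isPath_def, arcWalk_support]
  refine List.Nodup.map_on ?_ List.nodup_range'
  intro x hx y hy hxy
  rw [List.mem_range'_1] at hx hy
  have hmod : x % n = y % n := congrArg Fin.val hxy
  rcases Nat.le_total x y with h | h
  · have hd : n ∣ y - x := (Nat.modEq_iff_dvd' h).mp hmod
    rcases Nat.eq_zero_or_pos (y - x) with h0 | h0
    · omega
    · have := Nat.le_of_dvd h0 hd; omega
  · have hd : n ∣ x - y := (Nat.modEq_iff_dvd' h).mp hmod.symm
    rcases Nat.eq_zero_or_pos (x - y) with h0 | h0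
    · omega
    · have := Nat.le_of_dvd h0 hd; omega

end CycleParityAux

namespace CycleParityAux

def pcount (c : Fin n → Fin k) (h3 : 3 ≤ n) (i : Fin k) (a m : ℕ) : ℕ :=
  (List.range' a m).countP (fun j => c (vtx h3 j) == i)

def gvec (c : Fin n → Fin k) (h3 : 3 ≤ n) (m : ℕ) : Fin k → ZMod 2 :=
  fun i => (pcount c h3 i 0 m : ZMod 2)

lemma pcount_append (c : Fin n → Fin k) (h3 : 3 ≤ n) (i : Fin k) (a s t : ℕ) :
    pcount c h3 i a (s + t) = pcount c h3 i a s + pcount c h3 i (a + s) t := by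
  rw [pcount, pcount, pcount, ← List.range'_append_1, List.countP_append]

lemma pcount_cycle (c : Fin n → Fin k) (h3 : 3 ≤ n) (i : Fin k) (a : ℕ) :
    pcount c h3 i a n = pcount c h3 i 0 n := by
  induction a with
  | zero => rfl
  | succ a ih =>
      rw [← ih]
      set P : ℕ → Bool := fun j => c (vtx h3 j) == i with hPdef
      have e1 : List.range' a (n+1) = List.range' a n ++ [a + n] := by
        simpa using List.range'_concat (step := 1) (s := a) (n := n)
      have e2 : List.range' a (n+1) = a :: List.range' (a+1) n := List.range'_succ (s := a) (n := n) (step := 1)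
      have h := congrArg (List.countP P) (e1.symm.trans e2)
      rw [List.countP_append, List.countP_cons, List.countP_cons, List.countP_nil] at h
      have hP : P (a + n) = P a := by simp only [hPdef, vtx_add_n]
      rw [hP] at h
      show (List.range' (a+1) n).countP P = (List.range' a n).countP P
      omega

lemma pcount_count (c : Fin n → Fin k) (h3 : 3 ≤ n) (i : Fin k) (a m : ℕ) :
    ((arcWalk h3 m a).support.map c).count i = pcount c h3 i a (m + 1) := by
  rw [arcWalk_support, List.map_map]
  simp only [List.count, List.countP_map]
  rfl

lemma gvec_add (c : Fin n → Fin k) (h3 : 3 ≤ n) (a m : ℕ) (i : Fin k) :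
    gvec c h3 (a + m) i = gvec c h3 a i + (pcount c h3 i a m : ZMod 2) := by
  rw [gvec, gvec, pcount_append c h3 i 0 a m, Nat.cast_add, Nat.zero_add]

end CycleParityAux

namespace CycleParityAux

lemma gvec_ne (c : Fin n → Fin k) (h3 : 3 ≤ n)
    (hc : IsParityColoring (cycleGraph n) c) (a m : ℕ) (hm1 : 1 ≤ m) (hmn : m ≤ n) :
    gvec c h3 (a + m) ≠ gvec c h3 a := by
  obtain ⟨m, rfl⟩ : ∃ m', m = m' + 1 := ⟨m - 1, by omega⟩
  obtain ⟨i, hi⟩ := hc (arcWalk h3 m a) (arcWalk_isPath h3 m a (by omega))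
  rw [pcount_count] at hi
  intro heq
  have h1 : gvec c h3 (a + (m+1)) i = gvec c h3 a i + (pcount c h3 i a (m+1) : ZMod 2) :=
    gvec_add c h3 a (m+1) i
  have h2 : (pcount c h3 i a (m+1) : ZMod 2) = 1 := by
    rw [← ZMod.natCast_mod, Nat.odd_iff.mp hi, Nat.cast_one]
  rw [heq, h2] at h1
  exact one_ne_zero (left_eq_add.mp h1)

end CycleParityAux

namespace CycleParityAux

lemma gvec_add_2n (c : Fin n → Fin k) (h3 : 3 ≤ n) (a : ℕ) :
    gvec c h3 (a + 2 * n) = gvec c h3 a := by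
  have hsplit : a + 2 * n = (a + n) + n := by ring
  funext i
  have h1 := gvec_add c h3 (a + n) n i
  have h2 := gvec_add c h3 a n i
  rw [hsplit, h1, h2]
  simp only [pcount_cycle]
  have : ∀ x : ZMod 2, x + x = 0 := by decide
  rw [add_assoc, this, add_zero]

lemma gvec_key (c : Fin n → Fin k) (h3 : 3 ≤ n)
    (hc : IsParityColoring (cycleGraph n) c) (a b : ℕ) (hab : a < b) (hbn : b ≤ a + n) :
    gvec c h3 b ≠ gvec c h3 a := by
  have hb : b = a + (b - a) := by omega
  rw [hb]
  exact gvec_ne c h3 hc a (b - a) (by omega) (by omega)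

lemma gvec_zero (c : Fin n → Fin k) (h3 : 3 ≤ n) : gvec c h3 0 = 0 := by
  funext i; simp [gvec, pcount]

lemma gvec_ne_zero (c : Fin n → Fin k) (h3 : 3 ≤ n)
    (hc : IsParityColoring (cycleGraph n) c) (a : ℕ) (h0 : 0 < a) (h2n : a < 2 * n) :
    gvec c h3 a ≠ 0 := by
  rcases Nat.le_total a n with h | h
  · rw [← gvec_zero c h3]
    exact gvec_key c h3 hc 0 a h0 (by omega)
  · have hk := gvec_key c h3 hc a (2 * n) (by omega) (by omega)
    have h2 : gvec c h3 (2 * n) = 0 := by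
      have := gvec_add_2n c h3 0
      rw [Nat.zero_add] at this
      rw [this, gvec_zero]
    rw [h2] at hk
    exact fun h => hk h.symm

lemma gvec_injOn (c : Fin n → Fin k) (h3 : 3 ≤ n)
    (hc : IsParityColoring (cycleGraph n) c) (a b : ℕ)
    (ha0 : 0 < a) (ha : a < 2 * n) (hb0 : 0 < b) (hb : b < 2 * n)
    (heq : gvec c h3 a = gvec c h3 b) : a = b := by
  by_contra hne
  have main : ∀ x y : ℕ, 0 < x → y < 2 * n → x < y →
      gvec c h3 x = gvec c h3 y → False := by
    intro x y hx0 hy2 hxy hg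
    rcases Nat.le_total y (x + n) with h | h
    · exact gvec_key c h3 hc x y hxy h hg.symm
    · have hk := gvec_key c h3 hc y (x + 2 * n) (by omega) (by omega)
      rw [gvec_add_2n c h3 x] at hk
      exact hk hg
  rcases Nat.lt_or_ge a b with h | h
  · exact main a b ha0 hb h heq
  · exact main b a hb0 ha (by omega) heq.symm

end CycleParityAux

open CycleParityAux in
theorem cycle_parityColoring_bound_aux (n k : ℕ) (hn : 3 ≤ n)
    (c : Fin n → Fin k) (hc : IsParityColoring (SimpleGraph.cycleGraph n) c) :
    2 * n - 1 ≤ 2 ^ k - 1 ∧ Nat.clog 2 n + 1 ≤ k := by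
  have hcard : 2 * n - 1 ≤ 2 ^ k - 1 := by
    classical
    have hmaps : ∀ a ∈ Finset.Ioo 0 (2 * n), gvec c hn a ∈
        (Finset.univ.erase (0 : Fin k → ZMod 2)) := by
      intro a ha
      rw [Finset.mem_Ioo] at ha
      exact Finset.mem_erase.mpr ⟨gvec_ne_zero c hn hc a ha.1 ha.2, Finset.mem_univ _⟩
    have hinj : Set.InjOn (gvec c hn) (Finset.Ioo 0 (2 * n) : Finset ℕ) := by
      intro a ha b hb heq
      simp only [Finset.coe_Ioo, Set.mem_Ioo] at ha hb
      exact gvec_injOn c hn hc a b ha.1 ha.2 hb.1 hb.2 heq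
    have h := Finset.card_le_card_of_injOn (gvec c hn) hmaps hinj
    rw [Nat.card_Ioo, Finset.card_erase_of_mem (Finset.mem_univ _)] at h
    have hcu : (Finset.univ : Finset (Fin k → ZMod 2)).card = 2 ^ k := by
      simp [Finset.card_univ, ZMod.card]
    rw [hcu] at h
    omega
  refine ⟨hcard, ?_⟩
  have hk1 : 1 ≤ k := by
    rcases Nat.eq_zero_or_pos k with rfl | h
    · simp at hcard; omega
    · exact h
  have hp1 : 1 ≤ 2 ^ k := Nat.one_le_two_pow
  have h2n : 2 * n ≤ 2 ^ k := by omega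
  have hpow : 2 ^ k = 2 * 2 ^ (k - 1) := by
    conv_lhs => rw [show k = k - 1 + 1 by omega]
    rw [pow_succ, Nat.mul_comm]
  have hle : n ≤ 2 ^ (k - 1) := by omega
  have := (Nat.clog_le_iff_le_pow (by norm_num)).mpr hle
  omega


/-- If the cycle `C_n` (`n ≥ 3`) is coloured with `k` colours by a parity vertex colouring,
then `2n − 1 ≤ 2^k − 1`, and hence `k ≥ ⌈log₂ n⌉ + 1`. -/
theorem cycle_parityColoring_bound (n k : ℕ) (hn : 3 ≤ n)
    (c : Fin n → Fin k) (hc : IsParityColoring (SimpleGraph.cycleGraph n) c) :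
    2 * n - 1 ≤ 2 ^ k - 1 ∧ Nat.clog 2 n + 1 ≤ k :=
  cycle_parityColoring_bound_aux n k hn c hc
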